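/- With the quadratic symbol q₀₁ and the symbol c(ξ₁,ξ₂) := [(m − 2ξ₁ξ₂)q₀₁(ξ₁,ξ₂) − 2(ξ₂² + m)q₀₁(ξ₂,ξ₁)]/Δ(ξ₁,ξ₂), define c₀¹(ξ) := (i/m)g⁰¹_u − ((g¹¹_{uₜ} + 2g⁰¹_{uₓ})/(2m))ξ and c₁¹(ξ) := g¹¹_{uₜ}/4 + f_{uₜu}/(2m) − (i/m)g⁰¹_u ξ. Then there exists C > 0 such that for all real ξ₁, ξ₂ with ⟨ξ₁⟩ ≤ ⟨ξ₂⟩/20 one has |c(ξ₁,ξ₂) − c₀¹(ξ₁)ξ₂ − c₁¹(ξ₁)| ≤ C(1 + |ξ₁|³)/|ξ₂|, where ⟨ξ⟩ := (1 + ξ²)^{1/2}. -/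

import Mathlib

open Complex

/-- The quadratic symbol
`q₀₁(ξ₁,ξ₂) = f_{uₜu} + 2i g⁰¹_u ξ₁ − 2 g⁰¹_{uₓ} ξ₁ξ₂ − g¹¹_{uₜ} ξ₂²`. -/
noncomputable def q01 (futu g01u g01ux g11ut : ℝ) (ξ₁ ξ₂ : ℝ) : ℂ :=
  (futu : ℂ) + 2 * Complex.I * g01u * ξ₁ - 2 * g01ux * ξ₁ * ξ₂
    - (g11ut : ℂ) * (ξ₂ : ℂ)^2

/-- The denominator `Δ(ξ₁,ξ₂) = (m − 2ξ₁ξ₂)² − 4(ξ₁² + m)(ξ₂² + m)`. -/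
noncomputable def Δc (m ξ₁ ξ₂ : ℝ) : ℂ :=
  ((m : ℂ) - 2*ξ₁*ξ₂)^2 - 4*((ξ₁ : ℂ)^2 + m)*((ξ₂ : ℂ)^2 + m)

/-- The (non-symmetric) normal form symbol
`c(ξ₁,ξ₂) = [(m − 2ξ₁ξ₂)q₀₁(ξ₁,ξ₂) − 2(ξ₂² + m)q₀₁(ξ₂,ξ₁)]/Δ(ξ₁,ξ₂)`. -/
noncomputable def cSym (m futu g01u g01ux g11ut : ℝ) (ξ₁ ξ₂ : ℝ) : ℂ :=
  (((m : ℂ) - 2*ξ₁*ξ₂) * q01 futu g01u g01ux g11ut ξ₁ ξ₂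
    - 2*((ξ₂ : ℂ)^2 + m) * q01 futu g01u g01ux g11ut ξ₂ ξ₁) / Δc m ξ₁ ξ₂

/-- First low–high Taylor coefficient
`c₀¹(ξ) = (i/m)g⁰¹_u − ((g¹¹_{uₜ} + 2g⁰¹_{uₓ})/(2m))ξ`. -/
noncomputable def c01 (m g01u g01ux g11ut : ℝ) (ξ : ℝ) : ℂ :=
  Complex.I/m * g01u - ((g11ut : ℂ) + 2*g01ux)/(2*m) * ξ

/-- Second low–high Taylor coefficient
`c₁¹(ξ) = g¹¹_{uₜ}/4 + f_{uₜu}/(2m) − (i/m)g⁰¹_u ξ`. -/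
noncomputable def c11 (m futu g01u g11ut : ℝ) (ξ : ℝ) : ℂ :=
  (g11ut : ℂ)/4 + (futu : ℂ)/(2*m) - Complex.I/m * g01u * ξ

/-- Bound for a real cubic polynomial. -/
lemma cubic_bound (a b c d ξ : ℝ) :
    |a*ξ^3 + b*ξ^2 + c*ξ + d| ≤ (|a|+|b|+|c|+|d|) * (1 + |ξ|^3) := by
  have h : (0:ℝ) ≤ |ξ| := abs_nonneg ξ
  have k1 : |ξ| ≤ 1 + |ξ|^3 := by nlinarith [sq_nonneg (|ξ|-1), sq_nonneg (|ξ|+1)]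
  have k2 : |ξ|^2 ≤ 1 + |ξ|^3 := by nlinarith [sq_nonneg (|ξ|-1)]
  calc |a*ξ^3 + b*ξ^2 + c*ξ + d| ≤ |a*ξ^3| + |b*ξ^2| + |c*ξ| + |d| := by
        exact (abs_add_le _ _).trans (by gcongr; exact (abs_add_le _ _).trans (by gcongr; exact abs_add_le _ _))
    _ = |a| * |ξ|^3 + |b| * |ξ|^2 + |c| * |ξ| + |d| := by
        rw [abs_mul, abs_mul, abs_mul, _root_.abs_pow, _root_.abs_pow]
    _ ≤ (|a|+|b|+|c|+|d|) * (1 + |ξ|^3) := by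
        nlinarith [mul_le_mul_of_nonneg_left k1 (abs_nonneg c),
          mul_le_mul_of_nonneg_left k2 (abs_nonneg b),
          mul_nonneg (abs_nonneg d) (pow_nonneg h 3), abs_nonneg a, abs_nonneg d]

/-- `|a + bI| ≤ |a| + |b|`. -/
lemma abs_add_mul_I_le (a b : ℝ) :
    ‖(a:ℂ) + (b:ℂ) * Complex.I‖ ≤ |a| + |b| := by
  rw [Complex.norm_add_mul_I]
  have h : a^2 + b^2 ≤ (|a|+|b|)^2 := by
    nlinarith [_root_.sq_abs a, _root_.sq_abs b, mul_nonneg (abs_nonneg a) (abs_nonneg b)]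
  calc Real.sqrt (a^2+b^2) ≤ Real.sqrt ((|a|+|b|)^2) := Real.sqrt_le_sqrt h
    _ = |a|+|b| := Real.sqrt_sq (by positivity)

lemma div_rearrange (k x y mm : ℝ) (hy : y ≠ 0) (hmm : mm ≠ 0) :
    (k*x*y)/(2*mm*y^2) = (k/(2*mm))*x/y := by
  field_simp

/-- The key algebraic identity for the remainder. -/
lemma key_identity (m futu g01u g01ux g11ut ξ₁ ξ₂ : ℝ) (hm : m ≠ 0)
    (hΔ : Δc m ξ₁ ξ₂ ≠ 0) :
    cSym m futu g01u g01ux g11ut ξ₁ ξ₂ - c01 m g01u g01ux g11ut ξ₁ * ξ₂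
        - c11 m futu g01u g11ut ξ₁
      = (((2*futu*ξ₁^2 + 3*m*g11ut*ξ₁^2 + m*futu/2 + 3*m^2*g11ut/4 : ℝ) : ℂ)
          + ((-4*g01u*ξ₁^3 - m*g01u*ξ₁ : ℝ) : ℂ) * Complex.I
          + (((-2*g11ut*ξ₁^3 - 4*g01ux*ξ₁^3 - m*g11ut*ξ₁/2 - m*g01ux*ξ₁ : ℝ) : ℂ)
             + ((-4*g01u*ξ₁^2 - m*g01u : ℝ) : ℂ) * Complex.I) * (ξ₂ : ℂ)) / Δc m ξ₁ ξ₂ := by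
  have hmc : (m:ℂ) ≠ 0 := by exact_mod_cast hm
  have h4m : (4*(m:ℂ)) ≠ 0 := by simp [hmc]
  have hX : c01 m g01u g01ux g11ut ξ₁ * ξ₂ + c11 m futu g01u g11ut ξ₁
      = ((4*Complex.I*g01u - 2*((g11ut:ℂ)+2*g01ux)*ξ₁)*ξ₂
          + ((m:ℂ)*g11ut + 2*futu - 4*Complex.I*g01u*ξ₁)) / (4*m) := by
    have hmu : (m:ℂ)*(m:ℂ)⁻¹ = 1 := mul_inv_cancel₀ hmc
    unfold c01 c11
    linear_combination (-(g11ut:ℂ)/4) * hmu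
  have hnum : (((m : ℂ) - 2*ξ₁*ξ₂) * q01 futu g01u g01ux g11ut ξ₁ ξ₂
        - 2*((ξ₂ : ℂ)^2 + m) * q01 futu g01u g01ux g11ut ξ₂ ξ₁)
      - (c01 m g01u g01ux g11ut ξ₁ * ξ₂ + c11 m futu g01u g11ut ξ₁) * Δc m ξ₁ ξ₂
      = (((2*futu*ξ₁^2 + 3*m*g11ut*ξ₁^2 + m*futu/2 + 3*m^2*g11ut/4 : ℝ) : ℂ)
          + ((-4*g01u*ξ₁^3 - m*g01u*ξ₁ : ℝ) : ℂ) * Complex.I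
          + (((-2*g11ut*ξ₁^3 - 4*g01ux*ξ₁^3 - m*g11ut*ξ₁/2 - m*g01ux*ξ₁ : ℝ) : ℂ)
             + ((-4*g01u*ξ₁^2 - m*g01u : ℝ) : ℂ) * Complex.I) * (ξ₂ : ℂ)) := by
    rw [hX, div_mul_eq_mul_div, sub_div' h4m, div_eq_iff h4m]
    unfold q01 Δc
    push_cast
    ring
  rw [← hnum, sub_div, mul_div_cancel_right₀ _ hΔ, cSym]
  ring

set_option maxHeartbeats 1000000 in
/-- Low–high symbol expansion of the non-symmetric normal form correction `C`:
`|c(ξ₁,ξ₂) − c₀¹(ξ₁)ξ₂ − c₁¹(ξ₁)| ≤ C(1 + |ξ₁|³)/|ξ₂|` for `⟨ξ₁⟩ ≤ ⟨ξ₂⟩/20`. -/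
theorem cSym_low_high_expansion (m fuu futut futu g01u g01ut g01ux g11u g11ut g11ux : ℝ)
    (hm : 0 < m) :
    ∃ C > 0, ∀ ξ₁ ξ₂ : ℝ,
      Real.sqrt (1 + ξ₁^2) ≤ Real.sqrt (1 + ξ₂^2) / 20 →
      ‖cSym m futu g01u g01ux g11ut ξ₁ ξ₂
          - c01 m g01u g01ux g11ut ξ₁ * ξ₂ - c11 m futu g01u g11ut ξ₁‖
        ≤ C * (1 + |ξ₁|^3) / |ξ₂| := by
  set Ka : ℝ := (|(0:ℝ)| + |2*futu+3*m*g11ut| + |(0:ℝ)| + |m*futu/2+3*m^2*g11ut/4|)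
      + (|(-4*g01u)| + |(0:ℝ)| + |(-(m*g01u))| + |(0:ℝ)|) with hKa
  set Kb : ℝ := (|(-2*g11ut-4*g01ux)| + |(0:ℝ)| + |(-(m*g11ut/2)-m*g01ux)| + |(0:ℝ)|)
      + (|(0:ℝ)| + |(-4*g01u)| + |(0:ℝ)| + |(-(m*g01u))|) with hKb
  have hKa0 : 0 ≤ Ka := by rw [hKa]; positivity
  have hKb0 : 0 ≤ Kb := by rw [hKb]; positivity
  refine ⟨(Ka + Kb)/m + 1, by positivity, ?_⟩
  intro ξ₁ ξ₂ hξ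
  -- basic size facts
  have h1 : (1:ℝ) ≤ Real.sqrt (1 + ξ₁^2) := by
    have h1' := Real.sqrt_le_sqrt (show (1:ℝ) ≤ 1 + ξ₁^2 by nlinarith [sq_nonneg ξ₁])
    rwa [Real.sqrt_one] at h1'
  have h20 : (20:ℝ) ≤ Real.sqrt (1 + ξ₂^2) := by linarith
  have hsq : (400:ℝ) ≤ 1 + ξ₂^2 := by
    nlinarith [Real.sq_sqrt (show (0:ℝ) ≤ 1 + ξ₂^2 by positivity)]
  have h2 : (1:ℝ) ≤ |ξ₂| := by
    nlinarith [_root_.sq_abs ξ₂, abs_nonneg ξ₂]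
  have h2pos : (0:ℝ) < |ξ₂| := lt_of_lt_of_le one_pos h2
  -- the denominator
  have hΔr : Δc m ξ₁ ξ₂ = ((-(4*m*(ξ₁^2+ξ₂^2+ξ₁*ξ₂)) - 3*m^2 : ℝ) : ℂ) := by
    unfold Δc; push_cast; ring
  have hΔabs : ‖Δc m ξ₁ ξ₂‖ = 4*m*(ξ₁^2+ξ₂^2+ξ₁*ξ₂) + 3*m^2 := by
    rw [hΔr, Complex.norm_real, Real.norm_eq_abs, abs_of_nonpos (by nlinarith [sq_nonneg (ξ₁+ξ₂), sq_nonneg ξ₁, sq_nonneg ξ₂, sq_nonneg m])]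
    ring
  have hΔlb : 2*m*ξ₂^2 ≤ ‖Δc m ξ₁ ξ₂‖ := by
    rw [hΔabs]; nlinarith [sq_nonneg (ξ₁+ξ₂), sq_nonneg ξ₁, sq_nonneg m]
  have hΔpos : 0 < ‖Δc m ξ₁ ξ₂‖ := by
    have : (0:ℝ) < 2*m*ξ₂^2 := by nlinarith [_root_.sq_abs ξ₂]
    linarith
  have hΔne : Δc m ξ₁ ξ₂ ≠ 0 := by
    intro h; rw [h] at hΔpos; simp at hΔpos
  -- the four real polynomial bounds
  have hra : |2*futu*ξ₁^2 + 3*m*g11ut*ξ₁^2 + m*futu/2 + 3*m^2*g11ut/4|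
      ≤ (|(0:ℝ)| + |2*futu+3*m*g11ut| + |(0:ℝ)| + |m*futu/2+3*m^2*g11ut/4|) * (1+|ξ₁|^3) := by
    rw [show 2*futu*ξ₁^2 + 3*m*g11ut*ξ₁^2 + m*futu/2 + 3*m^2*g11ut/4
        = 0*ξ₁^3 + (2*futu+3*m*g11ut)*ξ₁^2 + 0*ξ₁ + (m*futu/2+3*m^2*g11ut/4) from by ring]
    exact cubic_bound _ _ _ _ _
  have hia : |-4*g01u*ξ₁^3 - m*g01u*ξ₁|
      ≤ (|(-4*g01u)| + |(0:ℝ)| + |(-(m*g01u))| + |(0:ℝ)|) * (1+|ξ₁|^3) := by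
    rw [show -4*g01u*ξ₁^3 - m*g01u*ξ₁
        = (-4*g01u)*ξ₁^3 + 0*ξ₁^2 + (-(m*g01u))*ξ₁ + 0 from by ring]
    exact cubic_bound _ _ _ _ _
  have hrb : |-2*g11ut*ξ₁^3 - 4*g01ux*ξ₁^3 - m*g11ut*ξ₁/2 - m*g01ux*ξ₁|
      ≤ (|(-2*g11ut-4*g01ux)| + |(0:ℝ)| + |(-(m*g11ut/2)-m*g01ux)| + |(0:ℝ)|) * (1+|ξ₁|^3) := by
    rw [show -2*g11ut*ξ₁^3 - 4*g01ux*ξ₁^3 - m*g11ut*ξ₁/2 - m*g01ux*ξ₁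
        = (-2*g11ut-4*g01ux)*ξ₁^3 + 0*ξ₁^2 + (-(m*g11ut/2)-m*g01ux)*ξ₁ + 0 from by ring]
    exact cubic_bound _ _ _ _ _
  have hib : |-4*g01u*ξ₁^2 - m*g01u|
      ≤ (|(0:ℝ)| + |(-4*g01u)| + |(0:ℝ)| + |(-(m*g01u))|) * (1+|ξ₁|^3) := by
    rw [show -4*g01u*ξ₁^2 - m*g01u
        = 0*ξ₁^3 + (-4*g01u)*ξ₁^2 + 0*ξ₁ + (-(m*g01u)) from by ring]
    exact cubic_bound _ _ _ _ _
  have hx3 : (0:ℝ) < 1 + |ξ₁|^3 := by positivity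
  -- numerator bound
  set A : ℂ := ((2*futu*ξ₁^2 + 3*m*g11ut*ξ₁^2 + m*futu/2 + 3*m^2*g11ut/4 : ℝ) : ℂ)
      + ((-4*g01u*ξ₁^3 - m*g01u*ξ₁ : ℝ) : ℂ) * Complex.I with hA
  set B : ℂ := ((-2*g11ut*ξ₁^3 - 4*g01ux*ξ₁^3 - m*g11ut*ξ₁/2 - m*g01ux*ξ₁ : ℝ) : ℂ)
      + ((-4*g01u*ξ₁^2 - m*g01u : ℝ) : ℂ) * Complex.I with hB
  have hAbound : ‖A‖ ≤ Ka * (1+|ξ₁|^3) := by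
    rw [hA, hKa]
    refine (abs_add_mul_I_le _ _).trans ?_
    rw [add_mul]
    exact add_le_add hra hia
  have hBbound : ‖B‖ ≤ Kb * (1+|ξ₁|^3) := by
    rw [hB, hKb]
    refine (abs_add_mul_I_le _ _).trans ?_
    rw [add_mul]
    exact add_le_add hrb hib
  have hnumb : ‖A + B * (ξ₂:ℂ)‖ ≤ (Ka+Kb) * (1+|ξ₁|^3) * |ξ₂| := by
    calc ‖A + B * (ξ₂:ℂ)‖ ≤ ‖A‖ + ‖B‖ * |ξ₂| := by
          refine (norm_add_le _ _).trans ?_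
          rw [norm_mul, Complex.norm_real, Real.norm_eq_abs]
      _ ≤ Ka * (1+|ξ₁|^3) * |ξ₂| + Kb * (1+|ξ₁|^3) * |ξ₂| := by
          refine add_le_add ?_ (by gcongr)
          calc ‖A‖ ≤ Ka * (1+|ξ₁|^3) := hAbound
            _ = Ka * (1+|ξ₁|^3) * 1 := by ring
            _ ≤ Ka * (1+|ξ₁|^3) * |ξ₂| := by
                exact mul_le_mul_of_nonneg_left h2 (by positivity)
      _ = (Ka+Kb) * (1+|ξ₁|^3) * |ξ₂| := by ring
  -- put it together
  rw [key_identity m futu g01u g01ux g11ut ξ₁ ξ₂ (ne_of_gt hm) hΔne, norm_div, ← hA, ← hB]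
  have hmξ : (0:ℝ) < 2*m*ξ₂^2 := by nlinarith [_root_.sq_abs ξ₂]
  calc ‖A + B * (ξ₂:ℂ)‖ / ‖Δc m ξ₁ ξ₂‖
      ≤ ((Ka+Kb) * (1+|ξ₁|^3) * |ξ₂|) / (2*m*ξ₂^2) := by
        exact div_le_div₀ (by positivity) hnumb hmξ hΔlb
    _ = ((Ka+Kb)/(2*m)) * (1+|ξ₁|^3) / |ξ₂| := by
        rw [show ξ₂^2 = |ξ₂|^2 from (_root_.sq_abs ξ₂).symm]
        exact div_rearrange _ _ _ _ (ne_of_gt h2pos) (ne_of_gt hm)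
    _ ≤ ((Ka+Kb)/m + 1) * (1+|ξ₁|^3) / |ξ₂| := by
        gcongr
        have : (Ka+Kb)/(2*m) ≤ (Ka+Kb)/m := by
          apply div_le_div_of_nonneg_left (by positivity) hm; linarith
        linarith
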